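/- The set of nonnegative integer solutions of a finite system of homogeneous linear equations with integer coefficients is an additively closed submonoid of ℕ^n that is finitely generated (by a finite set of fundamental solutions). -/

import Mathlib

open Finset in
lemma eq_of_le_of_sum_eq {n : ℕ} {x y : Fin n → ℕ} (h : y ≤ x)
    (hs : ∑ i, y i = ∑ i, x i) : y = x := by
  funext i
  exact (Finset.sum_eq_sum_iff_of_le (fun i _ => h i)).mp hs i (Finset.mem_univ i)

/-- Auxiliary lemma: a subset of `ℕ^n` closed under truncated subtraction is
generated (in the closure sense) by its minimal nonzero elements. -/
lemma mem_closure_min {n : ℕ} (C : Set (Fin n → ℕ))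
    (hsub : ∀ x y, x ∈ C → y ∈ C → y ≤ x → x - y ∈ C) :
    ∀ x ∈ C, x ∈ AddSubmonoid.closure
      {z | z ∈ C ∧ z ≠ 0 ∧ ∀ w ∈ C, w ≠ 0 → w ≤ z → w = z} := by
  set M := {z | z ∈ C ∧ z ≠ 0 ∧ ∀ w ∈ C, w ≠ 0 → w ≤ z → w = z} with hM
  have key : ∀ N : ℕ, ∀ x ∈ C, (∑ i, x i) ≤ N → x ∈ AddSubmonoid.closure M := by
    intro N
    induction N with
    | zero =>
      intro x hx hN
      have : x = 0 := by
        funext i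
        have := Finset.single_le_sum (f := x) (fun j _ => Nat.zero_le _) (Finset.mem_univ i)
        show x i = 0
        omega
      rw [this]; exact zero_mem _
    | succ N ih =>
      intro x hx hN
      by_cases hx0 : x = 0
      · rw [hx0]; exact zero_mem _
      · -- pick y ∈ C, y ≠ 0, y ≤ x with minimal coordinate sum
        set U : Set (Fin n → ℕ) := {y | y ∈ C ∧ y ≠ 0 ∧ y ≤ x} with hU
        have hUne : U.Nonempty := ⟨x, hx, hx0, le_refl x⟩
        obtain ⟨y, hyU, hymin⟩ :=
          (InvImage.wf (fun y : Fin n → ℕ => ∑ i, y i) Nat.lt_wfRel.wf).has_min U hUne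
        obtain ⟨hyC, hy0, hyx⟩ := hyU
        have hyM : y ∈ M := by
          refine ⟨hyC, hy0, fun w hwC hw0 hwy => ?_⟩
          have hwU : w ∈ U := ⟨hwC, hw0, le_trans hwy hyx⟩
          have hle : ∑ i, w i ≤ ∑ i, y i := Finset.sum_le_sum fun i _ => hwy i
          have heq : ∑ i, w i = ∑ i, y i := by
            have := hymin w hwU
            simp only [InvImage, Nat.lt_wfRel] at this
            replace this : ¬ (∑ i, w i < ∑ i, y i) := this
            omega
          exact eq_of_le_of_sum_eq hwy heq
        have hxy : x - y ∈ C := hsub x y hx hyC hyx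
        have hrec : x - y + y = x := by
          funext i
          exact Nat.sub_add_cancel (hyx i)
        have hysum : 0 < ∑ i, y i := by
          rcases Function.ne_iff.mp hy0 with ⟨i, hi⟩
          have := Finset.single_le_sum (f := y) (fun j _ => Nat.zero_le _) (Finset.mem_univ i)
          simp only [Pi.zero_apply] at hi
          omega
        have hsum : ∑ i, (x - y) i + ∑ i, y i = ∑ i, x i := by
          rw [← Finset.sum_add_distrib]
          exact Finset.sum_congr rfl fun i _ => congrFun hrec i
        have hlt : ∑ i, (x - y) i ≤ N := by omega
        have h1 : x - y ∈ AddSubmonoid.closure M := ih (x - y) hxy hlt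
        have h2 : y ∈ AddSubmonoid.closure M := AddSubmonoid.subset_closure hyM
        have h3 : x - y + y ∈ AddSubmonoid.closure M := add_mem h1 h2
        rwa [hrec] at h3
  intro x hx
  exact key (∑ i, x i) x hx le_rfl

/-- The set of nonnegative integer solutions of a finite homogeneous system of
linear equations with integer coefficients is an additive submonoid of `ℕ^n`
which is finitely generated (by a finite set of fundamental solutions). -/
theorem solution_set_is_fg_submonoid {m n : ℕ} (A : Matrix (Fin m) (Fin n) ℤ) :
    ∃ S : AddSubmonoid (Fin n → ℕ),
      (S : Set (Fin n → ℕ)) = {x | A.mulVec (fun i => (x i : ℤ)) = 0} ∧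
      S.FG := by
  set C : Set (Fin n → ℕ) := {x | A.mulVec (fun i => (x i : ℤ)) = 0} with hC
  have hzero : (0 : Fin n → ℕ) ∈ C := by
    show A.mulVec (fun i => (((0 : Fin n → ℕ)) i : ℤ)) = 0
    have : (fun i => (((0 : Fin n → ℕ)) i : ℤ)) = 0 := by funext i; simp
    rw [this, Matrix.mulVec_zero]
  have hadd : ∀ {a b : Fin n → ℕ}, a ∈ C → b ∈ C → a + b ∈ C := by
    intro a b ha hb
    show A.mulVec (fun i => ((a + b) i : ℤ)) = 0
    have : (fun i => ((a + b) i : ℤ)) =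
        (fun i => (a i : ℤ)) + (fun i => (b i : ℤ)) := by
      funext i; simp
    rw [this, Matrix.mulVec_add, ha, hb, add_zero]
  have hsub : ∀ x y, x ∈ C → y ∈ C → y ≤ x → x - y ∈ C := by
    intro x y hx hy hyx
    show A.mulVec (fun i => ((x - y) i : ℤ)) = 0
    have : (fun i => ((x - y) i : ℤ)) =
        (fun i => (x i : ℤ)) - (fun i => (y i : ℤ)) := by
      funext i
      simp only [Pi.sub_apply]
      exact_mod_cast Nat.cast_sub (hyx i)
    rw [this, Matrix.mulVec_sub, hx, hy, sub_zero]
  set S : AddSubmonoid (Fin n → ℕ) :=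
    { carrier := C, zero_mem' := hzero, add_mem' := hadd } with hS
  refine ⟨S, rfl, ?_⟩
  set M := {z | z ∈ C ∧ z ≠ 0 ∧ ∀ w ∈ C, w ≠ 0 → w ≤ z → w = z} with hMdef
  have hanti : IsAntichain (· ≤ ·) M := by
    intro a ha b hb hab hle
    exact hab (hb.2.2 a ha.1 ha.2.1 hle)
  have hfin : M.Finite :=
    hanti.finite_of_partiallyWellOrderedOn (Set.isPWO_of_wellQuasiOrderedLE M)
  refine ⟨hfin.toFinset, le_antisymm ?_ ?_⟩
  · rw [AddSubmonoid.closure_le]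
    intro z hz
    simp only [Set.Finite.coe_toFinset] at hz
    exact hz.1
  · intro x hx
    have := mem_closure_min C hsub x hx
    rwa [Set.Finite.coe_toFinset]
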